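/- Let G be a finite simple graph, let p be a path in G from u to v, and let i be a natural number with 0 < i < length(p); write m for the i-th vertex of p. Then there is a walk from u to v in G whose support does not contain m if and only if there exists a cycle in G whose support contains m, the (i−1)-st vertex of p, and the (i+1)-st vertex of p. (This is the graph-theoretic dichotomy underlying the paper's Lemma 5.3: either removing the internal spine vertex m separates the spine, or there is a biconnected component containing both spine edges incident to m.) -/

import Mathlib

open SimpleGraph Walk

private lemma getVert_eq_support_getElem {V : Type*} {G : SimpleGraph V} {u v : V}
    (p : G.Walk u v) {n : ℕ} (hn : n ≤ p.length) :
    p.getVert n = p.support[n]'(by rw [Walk.length_support]; omega) := by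
  induction p generalizing n with
  | nil =>
    have : n = 0 := by simpa using hn
    subst this; simp
  | cons h q ih =>
    cases n with
    | zero => simp
    | succ n =>
      simp only [Walk.support_cons, Walk.getVert_cons_succ, List.getElem_cons_succ]
      exact ih (by simpa [Nat.succ_le_succ_iff] using hn)

private lemma path_getVert_inj {V : Type*} {G : SimpleGraph V} {u v : V} {p : G.Walk u v}
    (hp : p.IsPath) {j k : ℕ} (hj : j ≤ p.length) (hk : k ≤ p.length)
    (h : p.getVert j = p.getVert k) : j = k := by
  rw [_root_.getVert_eq_support_getElem p hj, _root_.getVert_eq_support_getElem p hk] at h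
  have hn : p.support.Nodup := (Walk.isPath_def p).mp hp
  exact (List.Nodup.getElem_inj_iff hn).mp h

private lemma getVert_takeUntil' {V : Type*} {G : SimpleGraph V} [DecidableEq V] {u v a : V}
    (p : G.Walk u v) (ha : a ∈ p.support) {n : ℕ} (hn : n ≤ (p.takeUntil a ha).length) :
    (p.takeUntil a ha).getVert n = p.getVert n := by
  conv_rhs => rw [← Walk.take_spec p ha]
  rw [Walk.getVert_append]
  split_ifs with h
  · rfl
  · have : n = (p.takeUntil a ha).length := by omega
    subst this
    simp [Walk.getVert_length]

private lemma getVert_dropUntil' {V : Type*} {G : SimpleGraph V} [DecidableEq V] {u v a : V}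
    (p : G.Walk u v) (ha : a ∈ p.support) (n : ℕ) :
    (p.dropUntil a ha).getVert n = p.getVert ((p.takeUntil a ha).length + n) := by
  have h := Walk.getVert_append (p.takeUntil a ha) (p.dropUntil a ha)
    ((p.takeUntil a ha).length + n)
  rw [Walk.take_spec] at h
  rw [h]
  split_ifs with h'
  · omega
  · congr 1
    omega

private lemma length_takeUntil_add' {V : Type*} {G : SimpleGraph V} [DecidableEq V] {u v a : V}
    (p : G.Walk u v) (ha : a ∈ p.support) :
    (p.takeUntil a ha).length + (p.dropUntil a ha).length = p.length := by
  conv_rhs => rw [← Walk.take_spec p ha]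
  rw [Walk.length_append]

private lemma not_mem_takeUntil' {V : Type*} {G : SimpleGraph V} [DecidableEq V] {u v a : V}
    {p : G.Walk u v} (hp : p.IsPath) (ha : a ∈ p.support) {j k : ℕ} (hj : j ≤ p.length)
    (hja : p.getVert j = a) (hk : k ≤ p.length) (hjk : j < k) :
    p.getVert k ∉ (p.takeUntil a ha).support := by
  intro hmem
  obtain ⟨n, hn, hnle⟩ := Walk.mem_support_iff_exists_getVert.mp hmem
  have hlt : (p.takeUntil a ha).length ≤ p.length := Walk.length_takeUntil_le p ha
  rw [getVert_takeUntil' p ha hnle] at hn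
  have hnk : n = k := path_getVert_inj hp (le_trans hnle hlt) hk hn
  have hta : p.getVert (p.takeUntil a ha).length = a := by
    rw [← getVert_takeUntil' p ha le_rfl, Walk.getVert_length]
  have htj : (p.takeUntil a ha).length = j := path_getVert_inj hp hlt hj (hta.trans hja.symm)
  omega

private lemma not_mem_dropUntil' {V : Type*} {G : SimpleGraph V} [DecidableEq V] {u v a : V}
    {p : G.Walk u v} (hp : p.IsPath) (ha : a ∈ p.support) {j k : ℕ} (hj : j ≤ p.length)
    (hja : p.getVert j = a) (hk : k ≤ p.length) (hkj : k < j) :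
    p.getVert k ∉ (p.dropUntil a ha).support := by
  intro hmem
  obtain ⟨n, hn, hnle⟩ := Walk.mem_support_iff_exists_getVert.mp hmem
  have hadd := length_takeUntil_add' p ha
  have hlt : (p.takeUntil a ha).length ≤ p.length := Walk.length_takeUntil_le p ha
  rw [getVert_dropUntil' p ha n] at hn
  have hta : p.getVert (p.takeUntil a ha).length = a := by
    rw [← getVert_takeUntil' p ha le_rfl, Walk.getVert_length]
  have htj : (p.takeUntil a ha).length = j := path_getVert_inj hp hlt hj (hta.trans hja.symm)
  have : (p.takeUntil a ha).length + n = k :=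
    path_getVert_inj hp (by omega) hk hn
  omega

theorem stmt_4 {V : Type*} [Fintype V] (G : SimpleGraph V) {u v : V}
    (p : G.Walk u v) (hp : p.IsPath) (i : ℕ) (hi0 : 0 < i) (hil : i < p.length) :
    (∃ q : G.Walk u v, p.getVert i ∉ q.support) ↔
      ∃ (x : V) (c : G.Walk x x), c.IsCycle ∧
        p.getVert i ∈ c.support ∧
        p.getVert (i - 1) ∈ c.support ∧
        p.getVert (i + 1) ∈ c.support := by
  classical
  set m := p.getVert i with hm
  set a := p.getVert (i - 1) with ha
  set b := p.getVert (i + 1) with hb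
  have hi1 : i - 1 ≤ p.length := by omega
  have hi2 : i ≤ p.length := le_of_lt hil
  have hi3 : i + 1 ≤ p.length := hil
  have ham : a ≠ m := fun h => by
    have := path_getVert_inj hp hi1 hi2 h; omega
  have hbm : b ≠ m := fun h => by
    have := path_getVert_inj hp hi3 hi2 h; omega
  have hab : a ≠ b := fun h => by
    have := path_getVert_inj hp hi1 hi3 h; omega
  have ha_mem : a ∈ p.support := Walk.mem_support_iff_exists_getVert.mpr ⟨i - 1, rfl, hi1⟩
  have hb_mem : b ∈ p.support := Walk.mem_support_iff_exists_getVert.mpr ⟨i + 1, rfl, hi3⟩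
  have adj_am : G.Adj a m := by
    have h1 := p.adj_getVert_succ (i := i - 1) (by omega)
    have he : i - 1 + 1 = i := by omega
    rw [he] at h1
    exact h1
  have adj_mb : G.Adj m b := p.adj_getVert_succ hil
  have hmt : m ∉ (p.takeUntil a ha_mem).support := by
    have := not_mem_takeUntil' hp ha_mem hi1 rfl hi2 (by omega)
    exact this
  have hmd : m ∉ (p.dropUntil b hb_mem).support := by
    have := not_mem_dropUntil' hp hb_mem hi3 rfl hi2 (by omega)
    exact this
  constructor
  · rintro ⟨q, hq⟩
    set w0 : G.Walk a b :=
      (p.takeUntil a ha_mem).reverse.append (q.append (p.dropUntil b hb_mem).reverse) with hw0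
    have hmw0 : m ∉ w0.support := by
      rw [hw0]
      simp only [Walk.mem_support_append_iff, Walk.support_reverse, List.mem_reverse]
      push_neg
      exact ⟨hmt, hq, hmd⟩
      
    set w := w0.bypass with hw
    have hwp : w.IsPath := w0.bypass_isPath
    have hmw : m ∉ w.support := fun h => hmw0 (w0.support_bypass_subset h)
    refine ⟨a, Walk.cons adj_am (Walk.cons adj_mb w.reverse), ?_, ?_, ?_, ?_⟩
    · rw [Walk.cons_isCycle_iff]
      constructor
      · rw [Walk.cons_isPath_iff]
        refine ⟨hwp.reverse, ?_⟩
        rw [Walk.support_reverse, List.mem_reverse]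
        exact hmw
      · simp only [Walk.edges_cons, List.mem_cons, Walk.edges_reverse, List.mem_reverse]
        push_neg
        constructor
        · intro h
          rw [Sym2.eq_iff] at h
          rcases h with ⟨h1, _⟩ | ⟨h1, _⟩
          · exact ham h1
          · exact hab h1
        · intro h
          exact hmw (w.snd_mem_support_of_mem_edges h)
    · simp
    · simp
    · have : b ∈ w.reverse.support := by
        rw [Walk.support_reverse, List.mem_reverse]
        exact w.end_mem_support
      simp [this]
  · rintro ⟨x, c, hc, hmc, hac, hbc⟩
    have hmem_rot : ∀ y, y ∈ c.support ↔ y ∈ (c.rotate m hmc).support := by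
      intro y
      conv_lhs => rw [← Walk.take_spec c hmc]
      rw [Walk.rotate, Walk.mem_support_append_iff, Walk.mem_support_append_iff, or_comm]
    have key : ∀ (c' : G.Walk m m), c'.IsCycle → a ∈ c'.support → b ∈ c'.support →
        ∃ w : G.Walk a b, m ∉ w.support := by
      intro c' hc' hac' hbc'
      cases c' with
      | nil => exact absurd rfl hc'.ne_nil
      | cons hadj q =>
        rw [Walk.cons_isCycle_iff] at hc'
        have hqp : q.IsPath := hc'.1
        have haq : a ∈ q.support := by
          rw [Walk.support_cons, List.mem_cons] at hac'
          rcases hac' with h | h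
          · exact absurd h ham
          · exact h
        have hbq : b ∈ q.support := by
          rw [Walk.support_cons, List.mem_cons] at hbc'
          rcases hbc' with h | h
          · exact absurd h hbm
          · exact h
        obtain ⟨ja, hja_eq, hja_le⟩ := Walk.mem_support_iff_exists_getVert.mp haq
        obtain ⟨jb, hjb_eq, hjb_le⟩ := Walk.mem_support_iff_exists_getVert.mp hbq
        have hja_lt : ja < q.length := by
          rcases lt_or_eq_of_le hja_le with h | h
          · exact h
          · exfalso; apply ham; rw [← hja_eq, h, Walk.getVert_length]
        have hjb_lt : jb < q.length := by
          rcases lt_or_eq_of_le hjb_le with h | h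
          · exact h
          · exfalso; apply hbm; rw [← hjb_eq, h, Walk.getVert_length]
        have hmta : m ∉ (q.takeUntil a haq).support := by
          have := not_mem_takeUntil' hqp haq hja_le hja_eq le_rfl hja_lt
          rwa [Walk.getVert_length] at this
        have hmtb : m ∉ (q.takeUntil b hbq).support := by
          have := not_mem_takeUntil' hqp hbq hjb_le hjb_eq le_rfl hjb_lt
          rwa [Walk.getVert_length] at this
        refine ⟨(q.takeUntil a haq).reverse.append (q.takeUntil b hbq), ?_⟩
        rw [Walk.mem_support_append_iff]
        push_neg
        refine ⟨?_, hmtb⟩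
        rw [Walk.support_reverse, List.mem_reverse]
        exact hmta
    obtain ⟨w, hmw⟩ := key (c.rotate m hmc) (hc.rotate hmc)
      ((hmem_rot a).mp hac) ((hmem_rot b).mp hbc)
    refine ⟨(p.takeUntil a ha_mem).append (w.append (p.dropUntil b hb_mem)), ?_⟩
    rw [Walk.mem_support_append_iff, Walk.mem_support_append_iff]
    push_neg
    exact ⟨hmt, hmw, hmd⟩
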